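/- Let ⟨ξ⟩ := √(1+ξ²) and define c*(ξ) := ξ²[2⟨ξ⟩ - ((2⟨ξ⟩+⟨2ξ⟩)(⟨ξ⟩⟨2ξ⟩+ξ²+⟨ξ⟩²)²)/(6⟨ξ⟩⟨2ξ⟩) + (⟨ξ⟩⟨2ξ⟩-⟨ξ⟩²-ξ²)²/(2(2⟨ξ⟩+⟨2ξ⟩)⟨ξ⟩⟨2ξ⟩)]. Then c*(0) = 0, (d/dξ)c*(0) = 0, and there is a constant C such that |c*(ξ)| ≤ C ξ² ⟨ξ⟩³ for all ξ ∈ ℝ. -/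

import Mathlib

/-- The Japanese bracket `⟨ξ⟩ = √(1+ξ²)`. -/
noncomputable def jb (ξ : ℝ) : ℝ := Real.sqrt (1 + ξ ^ 2)

/-- The resonant coefficient `c*(ξ)` of the cubic interaction at the space-time
resonance `(ξ,η,σ) = (ξ,0,-ξ)`. -/
noncomputable def cstar (ξ : ℝ) : ℝ :=
  ξ ^ 2 * (2 * jb ξ
    - ((2 * jb ξ + jb (2 * ξ)) * (jb ξ * jb (2 * ξ) + ξ ^ 2 + jb ξ ^ 2) ^ 2)
        / (6 * jb ξ * jb (2 * ξ))
    + (jb ξ * jb (2 * ξ) - jb ξ ^ 2 - ξ ^ 2) ^ 2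
        / (2 * (2 * jb ξ + jb (2 * ξ)) * jb ξ * jb (2 * ξ)))

lemma jb_sq (ξ : ℝ) : jb ξ ^ 2 = 1 + ξ ^ 2 := Real.sq_sqrt (by positivity)

lemma one_le_jb (ξ : ℝ) : 1 ≤ jb ξ := by
  rw [show (1:ℝ) = Real.sqrt 1 by simp]
  exact Real.sqrt_le_sqrt (by nlinarith [sq_nonneg ξ])

lemma jb_pos (ξ : ℝ) : 0 < jb ξ := lt_of_lt_of_le one_pos (one_le_jb ξ)

@[fun_prop]
lemma jb_diff (x : ℝ) : DifferentiableAt ℝ jb x := by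
  unfold jb
  exact DifferentiableAt.sqrt (by fun_prop) (by positivity)

lemma jb_zero : jb 0 = 1 := by simp [jb]

set_option maxHeartbeats 1000000 in
lemma cstar_bound (ξ : ℝ) : |cstar ξ| ≤ 14 * ξ ^ 2 * jb ξ ^ 3 := by
  set s := jb ξ with hs
  set t := jb (2 * ξ) with ht
  have h1s : 1 ≤ s := one_le_jb ξ
  have h1t : 1 ≤ t := one_le_jb (2 * ξ)
  have hs2 : s ^ 2 = 1 + ξ ^ 2 := jb_sq ξ
  have ht2 : t ^ 2 = 1 + (2 * ξ) ^ 2 := jb_sq (2 * ξ)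
  have hst : s ≤ t := by nlinarith [sq_nonneg ξ]
  have hts : t ≤ 2 * s := by nlinarith [sq_nonneg ξ]
  have hx : ξ ^ 2 ≤ s ^ 2 := by nlinarith
  have hs0 : (0:ℝ) < s := by linarith
  have ht0 : (0:ℝ) < t := by linarith
  have hB : (0:ℝ) < 6 * s * t := by positivity
  have hE : (0:ℝ) < 2 * (2 * s + t) * s * t := by positivity
  have hnum : (2 * s + t) * (s * t + ξ ^ 2 + s ^ 2) ^ 2 ≤ 64 * s ^ 4 * t := by
    have e1 : s * t + ξ ^ 2 + s ^ 2 ≤ 4 * s ^ 2 := by nlinarith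
    have e0 : 0 ≤ s * t + ξ ^ 2 + s ^ 2 := by positivity
    have e2 : (s * t + ξ ^ 2 + s ^ 2) ^ 2 ≤ 16 * s ^ 4 := by nlinarith
    have e3 : 2 * s + t ≤ 4 * s := by linarith
    nlinarith [sq_nonneg (s*t + ξ^2 + s^2), mul_pos hs0 ht0]
  have hA : ((2 * s + t) * (s * t + ξ ^ 2 + s ^ 2) ^ 2) / (6 * s * t) ≤ (32/3) * s ^ 3 := by
    rw [div_le_iff₀ hB]
    have : (32/3) * s ^ 3 * (6 * s * t) = 64 * s ^ 4 * t := by ring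
    linarith [hnum, this.ge]
  have hA0 : 0 ≤ ((2 * s + t) * (s * t + ξ ^ 2 + s ^ 2) ^ 2) / (6 * s * t) := by positivity
  have hDnum : (s * t - s ^ 2 - ξ ^ 2) ^ 2 ≤ 4 * s ^ 4 := by
    have e1 : s * t ≤ 2 * s ^ 2 := by nlinarith
    have e2 : s ^ 2 + ξ ^ 2 ≤ 2 * s ^ 2 := by linarith
    have e3 : -(2 * s ^ 2) ≤ s * t - s ^ 2 - ξ ^ 2 := by nlinarith [mul_pos hs0 ht0]
    have e4 : s * t - s ^ 2 - ξ ^ 2 ≤ 2 * s ^ 2 := by nlinarith [sq_nonneg ξ]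
    nlinarith
  have hD : (s * t - s ^ 2 - ξ ^ 2) ^ 2 / (2 * (2 * s + t) * s * t) ≤ (2/3) * s ^ 3 := by
    rw [div_le_iff₀ hE]
    have key : (3:ℝ) ≤ t * (2 * s + t) := by nlinarith
    calc (s * t - s ^ 2 - ξ ^ 2) ^ 2 ≤ 4 * s ^ 4 := hDnum
      _ = (4/3) * s ^ 4 * 3 := by ring
      _ ≤ (4/3) * s ^ 4 * (t * (2 * s + t)) :=
          mul_le_mul_of_nonneg_left key (by positivity)
      _ = 2 / 3 * s ^ 3 * (2 * (2 * s + t) * s * t) := by ring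
  have hD0 : 0 ≤ (s * t - s ^ 2 - ξ ^ 2) ^ 2 / (2 * (2 * s + t) * s * t) := by positivity
  have hcube : s ≤ s ^ 3 := by nlinarith
  have hg : |2 * s
      - ((2 * s + t) * (s * t + ξ ^ 2 + s ^ 2) ^ 2) / (6 * s * t)
      + (s * t - s ^ 2 - ξ ^ 2) ^ 2 / (2 * (2 * s + t) * s * t)| ≤ 14 * s ^ 3 := by
    rw [abs_le]
    constructor <;> nlinarith
  calc |cstar ξ| = ξ ^ 2 * |2 * s
      - ((2 * s + t) * (s * t + ξ ^ 2 + s ^ 2) ^ 2) / (6 * s * t)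
      + (s * t - s ^ 2 - ξ ^ 2) ^ 2 / (2 * (2 * s + t) * s * t)| := by
        rw [cstar, abs_mul, abs_of_nonneg (sq_nonneg ξ)]
    _ ≤ ξ ^ 2 * (14 * s ^ 3) := mul_le_mul_of_nonneg_left hg (sq_nonneg ξ)
    _ = 14 * ξ ^ 2 * s ^ 3 := by ring

/-- Properties of `c*`: `c*(0) = 0`, `(c*)'(0) = 0`, and `|c*(ξ)| ≤ C ξ² ⟨ξ⟩³`. -/
theorem stmt_19 :
    cstar 0 = 0 ∧ deriv cstar 0 = 0 ∧
    ∃ C : ℝ, ∀ ξ : ℝ, |cstar ξ| ≤ C * ξ ^ 2 * jb ξ ^ 3 := by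
  refine ⟨by simp [cstar], ?_, 14, cstar_bound⟩
  have hq1 : DifferentiableAt ℝ (fun ξ : ℝ =>
      ((2 * jb ξ + jb (2 * ξ)) * (jb ξ * jb (2 * ξ) + ξ ^ 2 + jb ξ ^ 2) ^ 2)
        / (6 * jb ξ * jb (2 * ξ))) 0 :=
    DifferentiableAt.div (by fun_prop) (by fun_prop) (by norm_num [jb_zero])
  have hq2 : DifferentiableAt ℝ (fun ξ : ℝ =>
      (jb ξ * jb (2 * ξ) - jb ξ ^ 2 - ξ ^ 2) ^ 2
        / (2 * (2 * jb ξ + jb (2 * ξ)) * jb ξ * jb (2 * ξ))) 0 :=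
    DifferentiableAt.div (by fun_prop) (by fun_prop) (by norm_num [jb_zero])
  have hg : DifferentiableAt ℝ (fun ξ : ℝ => 2 * jb ξ
      - ((2 * jb ξ + jb (2 * ξ)) * (jb ξ * jb (2 * ξ) + ξ ^ 2 + jb ξ ^ 2) ^ 2)
          / (6 * jb ξ * jb (2 * ξ))
      + (jb ξ * jb (2 * ξ) - jb ξ ^ 2 - ξ ^ 2) ^ 2
          / (2 * (2 * jb ξ + jb (2 * ξ)) * jb ξ * jb (2 * ξ))) 0 :=
    (((differentiableAt_const _).mul (jb_diff 0)).sub hq1).add hq2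
  have hsq : HasDerivAt (fun ξ : ℝ => ξ ^ 2) 0 0 := by
    simpa using hasDerivAt_pow 2 (0 : ℝ)
  have h := hsq.mul hg.hasDerivAt
  have h0 : HasDerivAt cstar 0 0 := by
    have h' : HasDerivAt cstar _ 0 := h
    simpa using h'
  exact h0.deriv
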